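/- Let G = (V, ω) be a finite connected weighted graph with vertex measure μ. Let h, f : V → ℝ with f_i > 0 for all i ∈ V, and let real numbers α, p satisfy α ≥ p > 1. Then there exist a constant λ ∈ ℝ and a function φ : V → ℝ with φ_i > 0 for all i ∈ V such that (Δ_p φ)_i + h_i φ_i^{p-1} = λ f_i φ_i^{α-1} for every i ∈ V. -/

import Mathlib

/-- The discrete `p`-Laplacian on a finite weighted graph:
`(Δ_p φ)_i = (1/μ_i) ∑_j ω_ij |φ_j − φ_i|^{p−2} (φ_j − φ_i)`. -/
noncomputable def pLaplacian {V : Type*} [Fintype V] (μ : V → ℝ) (ω : V → V → ℝ)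
    (p : ℝ) (φ : V → ℝ) (i : V) : ℝ :=
  (1 / μ i) * ∑ j, ω i j * |φ j - φ i| ^ (p - 2) * (φ j - φ i)

open Real Filter

private lemma abs_rpow_smul {s : ℝ} (hs : 0 ≤ s) (q x : ℝ) : |s * x| ^ q = s ^ q * |x| ^ q := by
  rw [abs_mul, abs_of_nonneg hs, Real.mul_rpow hs (abs_nonneg x)]

noncomputable def yamG {V : Type*} [Fintype V] (μ : V → ℝ) (ω : V → V → ℝ) (h : V → ℝ)
    (p : ℝ) (φ : V → ℝ) : ℝ :=
  (1/2) * (∑ i, ∑ j, ω i j * |φ j - φ i| ^ p) - ∑ i, μ i * h i * |φ i| ^ p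

noncomputable def yamC {V : Type*} [Fintype V] (μ f : V → ℝ) (α : ℝ) (φ : V → ℝ) : ℝ :=
  ∑ i, μ i * f i * |φ i| ^ α

lemma cont_abs_rpow {q : ℝ} (hq : 1 < q) : Continuous fun x : ℝ => |x| ^ q :=
  Differentiable.continuous fun x => (hasDerivAt_abs_rpow x hq).differentiableAt

lemma yamC_cont {V : Type*} [Fintype V] (μ f : V → ℝ) {α : ℝ} (hα : 1 < α) :
    Continuous (yamC μ f α) := by
  unfold yamC
  exact continuous_finset_sum _ fun i _ =>
    continuous_const.mul ((cont_abs_rpow hα).comp (continuous_apply i))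

lemma yamG_cont {V : Type*} [Fintype V] (μ : V → ℝ) (ω : V → V → ℝ) (h : V → ℝ) {p : ℝ}
    (hp : 1 < p) : Continuous (yamG μ ω h p) := by
  unfold yamG
  refine Continuous.sub (continuous_const.mul ?_) ?_
  · exact continuous_finset_sum _ fun i _ => continuous_finset_sum _ fun j _ =>
      continuous_const.mul ((cont_abs_rpow hp).comp ((continuous_apply j).sub (continuous_apply i)))
  · exact continuous_finset_sum _ fun i _ =>
      continuous_const.mul ((cont_abs_rpow hp).comp (continuous_apply i))

lemma yamC_smul {V : Type*} [Fintype V] (μ f : V → ℝ) (α : ℝ) {s : ℝ} (hs : 0 ≤ s) (φ : V → ℝ) :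
    yamC μ f α (s • φ) = s ^ α * yamC μ f α φ := by
  unfold yamC
  rw [Finset.mul_sum]
  refine Finset.sum_congr rfl fun i _ => ?_
  rw [Pi.smul_apply, smul_eq_mul, abs_rpow_smul hs]
  ring

lemma yamG_smul {V : Type*} [Fintype V] (μ : V → ℝ) (ω : V → V → ℝ) (h : V → ℝ) (p : ℝ)
    {s : ℝ} (hs : 0 ≤ s) (φ : V → ℝ) :
    yamG μ ω h p (s • φ) = s ^ p * yamG μ ω h p φ := by
  unfold yamG
  have hA : (∑ i, ∑ j, ω i j * |(s • φ) j - (s • φ) i| ^ p)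
      = s ^ p * ∑ i, ∑ j, ω i j * |φ j - φ i| ^ p := by
    rw [Finset.mul_sum]
    refine Finset.sum_congr rfl fun i _ => ?_
    rw [Finset.mul_sum]
    refine Finset.sum_congr rfl fun j _ => ?_
    simp only [Pi.smul_apply, smul_eq_mul]
    rw [← mul_sub, abs_rpow_smul hs]; ring
  have hB : (∑ i, μ i * h i * |(s • φ) i| ^ p) = s ^ p * ∑ i, μ i * h i * |φ i| ^ p := by
    rw [Finset.mul_sum]
    refine Finset.sum_congr rfl fun i _ => ?_
    simp only [Pi.smul_apply, smul_eq_mul]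
    rw [abs_rpow_smul hs]; ring
  rw [hA, hB]; ring

lemma yamC_hasDerivAt {V : Type*} [Fintype V] (μ f : V → ℝ) {α : ℝ} (hα : 1 < α) (φ v : V → ℝ) :
    HasDerivAt (fun t : ℝ => yamC μ f α (φ + t • v))
      (∑ i, μ i * f i * (α * |φ i| ^ (α - 2) * φ i * v i)) 0 := by
  have hfun : (fun t : ℝ => yamC μ f α (φ + t • v))
      = fun t => ∑ i, μ i * f i * |φ i + t * v i| ^ α := by
    funext t; unfold yamC
    exact Finset.sum_congr rfl fun i _ => by simp
  rw [hfun]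
  refine HasDerivAt.fun_sum fun i _ => ?_
  have h1 : HasDerivAt (fun t : ℝ => φ i + t * v i) (v i) 0 := by
    simpa using ((hasDerivAt_id (0:ℝ)).mul_const (v i)).const_add (φ i)
  have h2 := (hasDerivAt_abs_rpow (φ i + 0 * v i) hα).comp 0 h1
  simp only [zero_mul, add_zero] at h2
  have h3 := h2.const_mul (μ i * f i)
  exact h3

lemma yamG_hasDerivAt {V : Type*} [Fintype V] (μ : V → ℝ) (ω : V → V → ℝ) (h : V → ℝ) {p : ℝ}
    (hp : 1 < p) (φ v : V → ℝ) :
    HasDerivAt (fun t : ℝ => yamG μ ω h p (φ + t • v))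
      ((1/2) * (∑ i, ∑ j, ω i j * (p * |φ j - φ i| ^ (p - 2) * (φ j - φ i) * (v j - v i)))
        - ∑ i, μ i * h i * (p * |φ i| ^ (p - 2) * φ i * v i)) 0 := by
  have hfun : (fun t : ℝ => yamG μ ω h p (φ + t • v))
      = fun t => (1/2) * (∑ i, ∑ j, ω i j * |(φ j - φ i) + t * (v j - v i)| ^ p)
          - ∑ i, μ i * h i * |φ i + t * v i| ^ p := by
    funext t; unfold yamG
    have e1 : ∀ a b : V, |(φ + t • v) b - (φ + t • v) a| = |(φ b - φ a) + t * (v b - v a)| := by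
      intro a b
      congr 1
      simp only [Pi.add_apply, Pi.smul_apply, smul_eq_mul]
      ring
    have e2 : ∀ a : V, (φ + t • v) a = φ a + t * v a := fun a => by
      simp only [Pi.add_apply, Pi.smul_apply, smul_eq_mul]
    simp only [e1]; simp only [e2]
  rw [hfun]
  refine HasDerivAt.sub ?_ ?_
  · refine HasDerivAt.const_mul _ (HasDerivAt.fun_sum fun i _ => HasDerivAt.fun_sum fun j _ => ?_)
    have h1 : HasDerivAt (fun t : ℝ => (φ j - φ i) + t * (v j - v i)) (v j - v i) 0 := by
      simpa using ((hasDerivAt_id (0:ℝ)).mul_const (v j - v i)).const_add (φ j - φ i)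
    have h2 := (hasDerivAt_abs_rpow ((φ j - φ i) + 0 * (v j - v i)) hp).comp 0 h1
    simp only [zero_mul, add_zero] at h2
    have h3 := h2.const_mul (ω i j)
    exact h3
  · refine HasDerivAt.fun_sum fun i _ => ?_
    have h1 : HasDerivAt (fun t : ℝ => φ i + t * v i) (v i) 0 := by
      simpa using ((hasDerivAt_id (0:ℝ)).mul_const (v i)).const_add (φ i)
    have h2 := (hasDerivAt_abs_rpow (φ i + 0 * v i) hp).comp 0 h1
    simp only [zero_mul, add_zero] at h2
    have h3 := h2.const_mul (μ i * h i)
    exact h3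

/-- **The p-th Yamabe equation on a finite connected graph.**
If `α ≥ p > 1`, `f > 0`, then `Δ_p φ + h φ^{p-1} = λ f φ^{α-1}` has a positive
solution `φ` for some constant `λ ∈ ℝ`. -/
theorem pth_yamabe_equation_has_positive_solution
    {V : Type*} [Fintype V] [Nonempty V]
    (μ : V → ℝ) (hμ : ∀ i, 0 < μ i)
    (ω : V → V → ℝ) (hωsym : ∀ i j, ω i j = ω j i)
    (hωnonneg : ∀ i j, 0 ≤ ω i j) (hωloop : ∀ i, ω i i = 0)
    (hconn : ∀ i j : V, Relation.ReflTransGen (fun a b => 0 < ω a b) i j)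
    (h f : V → ℝ) (hf : ∀ i, 0 < f i)
    (p α : ℝ) (hp : 1 < p) (hpα : p ≤ α) :
    ∃ (lam : ℝ) (φ : V → ℝ), (∀ i, 0 < φ i) ∧
      ∀ i, pLaplacian μ ω p φ i + h i * φ i ^ (p - 1) = lam * f i * φ i ^ (α - 1) := by
  classical
  have hα : 1 < α := lt_of_lt_of_le hp hpα
  have hα0 : α ≠ 0 := by linarith
  have hp0 : p ≠ 0 := by linarith
  have hppos : (0:ℝ) < p := by linarith
  -- the constraint set is nonempty
  have hSpos : 0 < ∑ j, μ j * f j :=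
    Finset.sum_pos (fun j _ => mul_pos (hμ j) (hf j)) Finset.univ_nonempty
  have hKne : Set.Nonempty {ψ : V → ℝ | yamC μ f α ψ = 1} := by
    refine ⟨fun _ => (∑ j, μ j * f j) ^ (-α⁻¹), ?_⟩
    have hb : (0:ℝ) < (∑ j, μ j * f j) ^ (-α⁻¹) := Real.rpow_pos_of_pos hSpos _
    show yamC μ f α _ = 1
    unfold yamC
    have e : ∀ i : V, μ i * f i * |(∑ j, μ j * f j) ^ (-α⁻¹)| ^ α
        = μ i * f i * (∑ j, μ j * f j)⁻¹ := by
      intro i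
      rw [abs_of_pos hb, ← Real.rpow_mul hSpos.le,
        show (-α⁻¹) * α = -1 by field_simp, Real.rpow_neg_one]
    simp only [e]
    rw [← Finset.sum_mul, mul_inv_cancel₀ (ne_of_gt hSpos)]
  -- the constraint set is compact
  have hKcl : IsClosed {ψ : V → ℝ | yamC μ f α ψ = 1} :=
    isClosed_eq (yamC_cont μ f hα) continuous_const
  have hRnn : (0:ℝ) ≤ ∑ j, ((μ j * f j)⁻¹) ^ (α⁻¹) :=
    Finset.sum_nonneg fun j _ => Real.rpow_nonneg (inv_nonneg.2 (mul_pos (hμ j) (hf j)).le) _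
  have hKsub : {ψ : V → ℝ | yamC μ f α ψ = 1} ⊆
      Metric.closedBall 0 (∑ j, ((μ j * f j)⁻¹) ^ (α⁻¹)) := by
    intro ψ hψ
    rw [Metric.mem_closedBall, dist_zero_right, pi_norm_le_iff_of_nonneg hRnn]
    intro i
    rw [Real.norm_eq_abs]
    have h1 : μ i * f i * |ψ i| ^ α ≤ 1 := by
      have h1a := Finset.single_le_sum (f := fun j => μ j * f j * |ψ j| ^ α)
        (fun j _ => mul_nonneg (mul_pos (hμ j) (hf j)).le (Real.rpow_nonneg (abs_nonneg _) _))
        (Finset.mem_univ i)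
      calc μ i * f i * |ψ i| ^ α ≤ ∑ j, μ j * f j * |ψ j| ^ α := h1a
        _ = 1 := hψ
    have h2 : |ψ i| ^ α ≤ (μ i * f i)⁻¹ := by
      rw [inv_eq_one_div, le_div_iff₀ (mul_pos (hμ i) (hf i)), mul_comm]
      exact h1
    calc |ψ i| = (|ψ i| ^ α) ^ α⁻¹ := by
          rw [← Real.rpow_mul (abs_nonneg _), mul_inv_cancel₀ hα0, Real.rpow_one]
      _ ≤ ((μ i * f i)⁻¹) ^ α⁻¹ :=
          Real.rpow_le_rpow (Real.rpow_nonneg (abs_nonneg _) _) h2 (inv_nonneg.2 (by linarith))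
      _ ≤ ∑ j, ((μ j * f j)⁻¹) ^ (α⁻¹) :=
          Finset.single_le_sum
            (fun j _ => Real.rpow_nonneg (inv_nonneg.2 (mul_pos (hμ j) (hf j)).le) _)
            (Finset.mem_univ i)
  have hKcomp : IsCompact {ψ : V → ℝ | yamC μ f α ψ = 1} :=
    (isCompact_closedBall 0 _).of_isClosed_subset hKcl hKsub
  -- minimize
  obtain ⟨φ0, hφ0K, hφ0min⟩ := hKcomp.exists_isMinOn hKne (yamG_cont μ ω h hp).continuousOn
  set φ : V → ℝ := fun i => |φ0 i| with hφdef
  have hφnn : ∀ i, 0 ≤ φ i := fun i => abs_nonneg _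
  have hφK : yamC μ f α φ = 1 := by
    have e : yamC μ f α φ = yamC μ f α φ0 := by
      unfold yamC
      exact Finset.sum_congr rfl fun i _ => by simp only [hφdef, abs_abs]
    rw [e]; exact hφ0K
  have hφmin : ∀ ψ : V → ℝ, yamC μ f α ψ = 1 → yamG μ ω h p φ ≤ yamG μ ω h p ψ := by
    intro ψ hψ
    have hle : yamG μ ω h p φ ≤ yamG μ ω h p φ0 := by
      unfold yamG
      have h1 : (∑ i, ∑ j, ω i j * |φ j - φ i| ^ p) ≤ ∑ i, ∑ j, ω i j * |φ0 j - φ0 i| ^ p := by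
        refine Finset.sum_le_sum fun i _ => Finset.sum_le_sum fun j _ => ?_
        refine mul_le_mul_of_nonneg_left
          (Real.rpow_le_rpow (abs_nonneg _) ?_ hppos.le) (hωnonneg i j)
        simp only [hφdef]
        exact abs_abs_sub_abs_le_abs_sub _ _
      have h2 : (∑ i, μ i * h i * |φ i| ^ p) = ∑ i, μ i * h i * |φ0 i| ^ p :=
        Finset.sum_congr rfl fun i _ => by simp only [hφdef, abs_abs]
      linarith
    exact le_trans hle (isMinOn_iff.1 hφ0min ψ hψ)
  -- Euler-Lagrange
  have hEL : ∀ i : V,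
      (∑ j, ω i j * |φ j - φ i| ^ (p - 2) * (φ j - φ i)) + μ i * h i * (|φ i| ^ (p - 2) * φ i)
        = -(yamG μ ω h p φ) * (μ i * f i * (|φ i| ^ (α - 2) * φ i)) := by
    have hdir : ∀ v : V → ℝ,
        ((1/2) * (∑ a, ∑ b, ω a b * (p * |φ b - φ a| ^ (p - 2) * (φ b - φ a) * (v b - v a)))
          - ∑ a, μ a * h a * (p * |φ a| ^ (p - 2) * φ a * v a))
        = (p / α) * yamG μ ω h p φ * (∑ a, μ a * f a * (α * |φ a| ^ (α - 2) * φ a * v a)) := by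
      intro v
      have hgd := yamG_hasDerivAt μ ω h hp φ v
      have hcd := yamC_hasDerivAt μ f hα φ v
      have hzeq : φ + (0:ℝ) • v = φ := by simp
      have hc0 : yamC μ f α (φ + (0:ℝ) • v) = 1 := by rw [hzeq]; exact hφK
      have hepos : ∀ᶠ t in nhds (0:ℝ), 0 < yamC μ f α (φ + t • v) := by
        have h2 := hcd.continuousAt.tendsto
        rw [hc0] at h2
        exact h2.eventually (eventually_gt_nhds one_pos)
      have hlm : IsLocalMin
          (fun t : ℝ => yamG μ ω h p (φ + t • v) * yamC μ f α (φ + t • v) ^ (-(p/α))) 0 := by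
        have hev : ∀ᶠ t in nhds (0:ℝ),
            yamG μ ω h p (φ + (0:ℝ) • v) * yamC μ f α (φ + (0:ℝ) • v) ^ (-(p/α))
              ≤ yamG μ ω h p (φ + t • v) * yamC μ f α (φ + t • v) ^ (-(p/α)) := by
          filter_upwards [hepos] with t hct
          have hs0 : (0:ℝ) < yamC μ f α (φ + t • v) ^ (-α⁻¹) := Real.rpow_pos_of_pos hct _
          have hCψ : yamC μ f α ((yamC μ f α (φ + t • v) ^ (-α⁻¹)) • (φ + t • v)) = 1 := by
            rw [yamC_smul μ f α hs0.le, ← Real.rpow_mul hct.le,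
              show (-α⁻¹) * α = -1 by field_simp, Real.rpow_neg_one]
            exact inv_mul_cancel₀ (ne_of_gt hct)
          have hGψ : yamG μ ω h p ((yamC μ f α (φ + t • v) ^ (-α⁻¹)) • (φ + t • v))
              = yamC μ f α (φ + t • v) ^ (-(p/α)) * yamG μ ω h p (φ + t • v) := by
            rw [yamG_smul μ ω h p hs0.le, ← Real.rpow_mul hct.le,
              show (-α⁻¹) * p = -(p/α) by rw [div_eq_mul_inv]; ring]
          calc yamG μ ω h p (φ + (0:ℝ) • v) * yamC μ f α (φ + (0:ℝ) • v) ^ (-(p/α))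
              = yamG μ ω h p φ := by rw [hzeq, hφK, Real.one_rpow, mul_one]
            _ ≤ yamG μ ω h p ((yamC μ f α (φ + t • v) ^ (-α⁻¹)) • (φ + t • v)) :=
                hφmin _ hCψ
            _ = yamG μ ω h p (φ + t • v) * yamC μ f α (φ + t • v) ^ (-(p/α)) := by
                rw [hGψ]; ring
        exact hev
      have hrd := hgd.mul (hcd.rpow_const (p := -(p/α)) (Or.inl (by rw [hc0]; exact one_ne_zero)))
      have h0 := hlm.hasDerivAt_eq_zero hrd
      rw [hzeq, hφK] at h0
      simp only [Real.one_rpow] at h0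
      linear_combination h0
    intro i
    have key := hdir (Pi.single i 1 : V → ℝ)
    have hT : (∑ a, μ a * h a * (p * |φ a| ^ (p - 2) * φ a * (Pi.single i 1 : V → ℝ) a))
        = μ i * h i * (p * (|φ i| ^ (p - 2) * φ i)) := by
      rw [Finset.sum_eq_single i]
      · rw [Pi.single_eq_same]; ring
      · intro b _ hb; rw [Pi.single_eq_of_ne hb]; ring
      · intro habs; exact absurd (Finset.mem_univ i) habs
    have hF : (∑ a, μ a * f a * (α * |φ a| ^ (α - 2) * φ a * (Pi.single i 1 : V → ℝ) a))
        = μ i * f i * (α * (|φ i| ^ (α - 2) * φ i)) := by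
      rw [Finset.sum_eq_single i]
      · rw [Pi.single_eq_same]; ring
      · intro b _ hb; rw [Pi.single_eq_of_ne hb]; ring
      · intro habs; exact absurd (Finset.mem_univ i) habs
    have hS : (∑ a, ∑ b, ω a b * (p * |φ b - φ a| ^ (p - 2) * (φ b - φ a)
          * ((Pi.single i 1 : V → ℝ) b - (Pi.single i 1 : V → ℝ) a)))
        = -2 * (p * ∑ j, ω i j * |φ j - φ i| ^ (p - 2) * (φ j - φ i)) := by
      have hsplit : ∀ a b : V, ω a b * (p * |φ b - φ a| ^ (p - 2) * (φ b - φ a)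
            * ((Pi.single i 1 : V → ℝ) b - (Pi.single i 1 : V → ℝ) a))
          = ω a b * (p * |φ b - φ a| ^ (p - 2) * (φ b - φ a)) * (Pi.single i 1 : V → ℝ) b
            - ω a b * (p * |φ b - φ a| ^ (p - 2) * (φ b - φ a)) * (Pi.single i 1 : V → ℝ) a :=
        fun a b => by ring
      simp only [hsplit, Finset.sum_sub_distrib]
      have e1 : (∑ a, ∑ b, ω a b * (p * |φ b - φ a| ^ (p - 2) * (φ b - φ a)) * (Pi.single i 1 : V → ℝ) b)
          = ∑ a, ω a i * (p * |φ i - φ a| ^ (p - 2) * (φ i - φ a)) := by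
        refine Finset.sum_congr rfl fun a _ => ?_
        rw [Finset.sum_eq_single i]
        · rw [Pi.single_eq_same, mul_one]
        · intro b _ hb; rw [Pi.single_eq_of_ne hb, mul_zero]
        · intro habs; exact absurd (Finset.mem_univ i) habs
      have e2 : (∑ a, ∑ b, ω a b * (p * |φ b - φ a| ^ (p - 2) * (φ b - φ a)) * (Pi.single i 1 : V → ℝ) a)
          = ∑ b, ω i b * (p * |φ b - φ i| ^ (p - 2) * (φ b - φ i)) := by
        rw [Finset.sum_eq_single i]
        · exact Finset.sum_congr rfl fun b _ => by rw [Pi.single_eq_same, mul_one]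
        · intro a _ ha
          exact Finset.sum_eq_zero fun b _ => by rw [Pi.single_eq_of_ne ha, mul_zero]
        · intro habs; exact absurd (Finset.mem_univ i) habs
      rw [e1, e2]
      have e3 : ∀ a : V, ω a i * (p * |φ i - φ a| ^ (p - 2) * (φ i - φ a))
          = -(ω i a * (p * |φ a - φ i| ^ (p - 2) * (φ a - φ i))) := by
        intro a; rw [hωsym a i, abs_sub_comm]; ring
      simp only [e3]
      rw [Finset.sum_neg_distrib]
      have e4 : (∑ a, ω i a * (p * |φ a - φ i| ^ (p - 2) * (φ a - φ i)))
          = p * ∑ j, ω i j * |φ j - φ i| ^ (p - 2) * (φ j - φ i) := by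
        rw [Finset.mul_sum]; exact Finset.sum_congr rfl fun j _ => by ring
      rw [e4]
      ring
    rw [hS, hT, hF] at key
    have hcancel : (p / α) * yamG μ ω h p φ * (μ i * f i * (α * (|φ i| ^ (α - 2) * φ i)))
        = p * (yamG μ ω h p φ * (μ i * f i * (|φ i| ^ (α - 2) * φ i))) := by
      have hdm : p / α * α = p := div_mul_cancel₀ p hα0
      linear_combination (yamG μ ω h p φ * (μ i * f i * (|φ i| ^ (α - 2) * φ i))) * hdm
    rw [hcancel] at key
    exact mul_left_cancel₀ (neg_ne_zero.2 hp0) (by linear_combination key)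
  -- positivity
  have hstep : ∀ a b : V, 0 < ω a b → φ a = 0 → φ b = 0 := by
    intro a b hab ha0
    have hD := hEL a
    rw [ha0] at hD
    simp only [abs_zero, mul_zero, zero_mul, sub_zero, add_zero] at hD
    have hterms : ∀ j ∈ Finset.univ, 0 ≤ ω a j * |φ j| ^ (p - 2) * φ j := fun j _ =>
      mul_nonneg (mul_nonneg (hωnonneg a j) (Real.rpow_nonneg (abs_nonneg _) _)) (hφnn j)
    have hall := (Finset.sum_eq_zero_iff_of_nonneg hterms).1 hD b (Finset.mem_univ b)
    by_contra hb0
    have hbpos : 0 < φ b := lt_of_le_of_ne (hφnn b) (Ne.symm hb0)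
    have hposterm : 0 < ω a b * |φ b| ^ (p - 2) * φ b :=
      mul_pos (mul_pos hab (Real.rpow_pos_of_pos (abs_pos.2 (ne_of_gt hbpos)) _)) hbpos
    rw [hall] at hposterm
    exact lt_irrefl 0 hposterm
  have hpos : ∀ i, 0 < φ i := by
    by_contra hcon
    push_neg at hcon
    obtain ⟨i0, hi0⟩ := hcon
    have hi00 : φ i0 = 0 := le_antisymm hi0 (hφnn i0)
    have hzero : ∀ j, φ j = 0 := by
      intro j
      have hc := hconn i0 j
      induction hc with
      | refl => exact hi00
      | tail _ hrel ih => exact hstep _ _ hrel ih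
    have hCzero : yamC μ f α φ = 0 := by
      unfold yamC
      refine Finset.sum_eq_zero fun i _ => ?_
      rw [hzero i, abs_zero, Real.zero_rpow hα0, mul_zero]
    rw [hφK] at hCzero
    exact one_ne_zero hCzero
  -- conclusion
  refine ⟨-(yamG μ ω h p φ), φ, hpos, ?_⟩
  intro i
  have hD := hEL i
  have habs : |φ i| = φ i := abs_of_pos (hpos i)
  have hXp : |φ i| ^ (p - 2) * φ i = φ i ^ (p - 1) := by
    rw [habs, ← Real.rpow_add_one (ne_of_gt (hpos i)) (p - 2)]
    congr 1; ring
  have hXα : |φ i| ^ (α - 2) * φ i = φ i ^ (α - 1) := by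
    rw [habs, ← Real.rpow_add_one (ne_of_gt (hpos i)) (α - 2)]
    congr 1; ring
  rw [hXp, hXα] at hD
  unfold pLaplacian
  have hμne : μ i ≠ 0 := ne_of_gt (hμ i)
  field_simp
  have hs : ∑ x, ω i x * (φ x - φ i) * |φ x - φ i| ^ (p - 2) = ∑ j, ω i j * |φ j - φ i| ^ (p - 2) * (φ j - φ i) :=
    Finset.sum_congr rfl fun j _ => by ring
  linear_combination hD + hs
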